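/- For an integer m ≥ 3, the even integer n maximizing f(n) = ∏_{j=1}^{n/2} (2·cos(π(2j−1)/(2m)))² over even n with 0 ≤ n ≤ m is n₀ = 2·⌊(m+1)/3⌋. -/

import Mathlib

open Real Finset

private lemma aux_angle_pos (m j : ℕ) (hj : 1 ≤ j) (hm : 1 ≤ m) :
    0 < Real.pi * (2 * (j : ℝ) - 1) / (2 * m) := by
  have hc : (1:ℝ) ≤ (j:ℝ) := by exact_mod_cast hj
  have hmR : (1:ℝ) ≤ (m:ℝ) := by exact_mod_cast hm
  have hπ := Real.pi_pos
  apply div_pos (by nlinarith) (by linarith)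

private lemma aux_pos (m j : ℕ) (hm : 3 ≤ m) (hj : 1 ≤ j) (h2j : 2*j ≤ m) :
    0 < 2 * Real.cos (Real.pi * (2 * (j : ℝ) - 1) / (2 * m)) := by
  have hc : (1:ℝ) ≤ (j:ℝ) := by exact_mod_cast hj
  have h2 : 2*(j:ℝ) ≤ (m:ℝ) := by exact_mod_cast h2j
  have hmR : (3:ℝ) ≤ (m:ℝ) := by exact_mod_cast hm
  have hπ := Real.pi_pos
  have hcos : 0 < Real.cos (Real.pi * (2 * (j : ℝ) - 1) / (2 * m)) := by
    apply Real.cos_pos_of_mem_Ioo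
    constructor
    · have := aux_angle_pos m j hj (by omega)
      linarith
    · rw [div_lt_div_iff₀ (by linarith) two_pos]
      nlinarith
  linarith

private lemma aux_gt (m j : ℕ) (hm : 3 ≤ m) (hj : 1 ≤ j) (h3j : 3*j ≤ m+1) :
    1 < (2 * Real.cos (Real.pi * (2 * (j : ℝ) - 1) / (2 * m))) ^ 2 := by
  have hc : (1:ℝ) ≤ (j:ℝ) := by exact_mod_cast hj
  have h3 : 3*(j:ℝ) ≤ (m:ℝ)+1 := by exact_mod_cast h3j
  have hmR : (3:ℝ) ≤ (m:ℝ) := by exact_mod_cast hm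
  have hπ := Real.pi_pos
  have hblt : Real.pi * (2 * (j : ℝ) - 1) / (2 * m) < Real.pi / 3 := by
    rw [div_lt_div_iff₀ (by linarith) (by norm_num)]
    nlinarith
  have hcos : Real.cos (Real.pi/3) < Real.cos (Real.pi * (2 * (j : ℝ) - 1) / (2 * m)) := by
    apply Real.cos_lt_cos_of_nonneg_of_le_pi
    · exact le_of_lt (aux_angle_pos m j hj (by omega))
    · linarith
    · exact hblt
  rw [Real.cos_pi_div_three] at hcos
  nlinarith

private lemma aux_lt (m j : ℕ) (hm : 3 ≤ m) (h3j : m+2 ≤ 3*j) (h2j : 2*j ≤ m) :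
    (2 * Real.cos (Real.pi * (2 * (j : ℝ) - 1) / (2 * m))) ^ 2 < 1 := by
  have hj : 1 ≤ j := by omega
  have hc : (1:ℝ) ≤ (j:ℝ) := by exact_mod_cast hj
  have h3 : (m:ℝ)+2 ≤ 3*(j:ℝ) := by exact_mod_cast h3j
  have hmR : (3:ℝ) ≤ (m:ℝ) := by exact_mod_cast hm
  have hπ := Real.pi_pos
  have hpos := aux_pos m j hm hj h2j
  have hbgt : Real.pi / 3 < Real.pi * (2 * (j : ℝ) - 1) / (2 * m) := by
    rw [div_lt_div_iff₀ (by norm_num) (by linarith)]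
    nlinarith
  have h2m : 2*(j:ℝ) ≤ (m:ℝ) := by exact_mod_cast h2j
  have hcos : Real.cos (Real.pi * (2 * (j : ℝ) - 1) / (2 * m)) < Real.cos (Real.pi/3) := by
    apply Real.cos_lt_cos_of_nonneg_of_le_pi
    · positivity
    · rw [div_le_iff₀ (by linarith)]
      nlinarith
    · exact hbgt
  rw [Real.cos_pi_div_three] at hcos
  nlinarith

/-- For `m ≥ 3`, the even integer `n` in `[0, m]` maximizing
`f(n) = ∏_{j=1}^{n/2} (2 cos(π(2j-1)/(2m)))²` is `n₀ = 2⌊(m+1)/3⌋`. -/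
theorem maximizing_even_n (m : ℕ) (hm : 3 ≤ m) :
    let f : ℕ → ℝ := fun n =>
      ∏ j ∈ Finset.Icc 1 (n / 2), (2 * Real.cos (Real.pi * (2 * (j : ℝ) - 1) / (2 * m))) ^ 2
    let n₀ : ℕ := 2 * ((m + 1) / 3)
    Even n₀ ∧ n₀ ≤ m ∧
      (∀ n : ℕ, Even n → n ≤ m → f n ≤ f n₀) ∧
      (∀ n : ℕ, Even n → n ≤ m → n ≠ n₀ → f n < f n₀) := by
  intro f n₀
  set a : ℕ → ℝ := fun j => (2 * Real.cos (Real.pi * (2 * (j : ℝ) - 1) / (2 * m))) ^ 2 with ha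
  set k₀ : ℕ := (m + 1) / 3 with hk₀def
  have h2k₀ : 2 * k₀ ≤ m := by omega
  have hIcc : ∀ k : ℕ, Finset.Icc 1 k = Finset.Ioc 0 k := by
    intro k; rfl
  have hf : ∀ n : ℕ, f n = ∏ j ∈ Finset.Ioc 0 (n/2), a j := by
    intro n; simp only [f, hIcc, ha]
  -- positivity of partial products
  have hprodpos : ∀ k : ℕ, 2*k ≤ m → 0 < ∏ j ∈ Finset.Ioc 0 k, a j := by
    intro k hk
    apply Finset.prod_pos
    intro j hj
    simp only [Finset.mem_Ioc] at hj
    have := aux_pos m j hm hj.1 (by omega)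
    positivity
  -- main strict comparison
  have key : ∀ n : ℕ, Even n → n ≤ m → n ≠ n₀ → f n < f n₀ := by
    intro n hn hnm hne
    obtain ⟨r, hr⟩ := hn
    have hn2 : n = 2 * (n/2) := by omega
    set k := n / 2 with hk
    have hkne : k ≠ k₀ := by
      simp only [n₀] at hne; omega
    rw [hf, hf]
    have hn₀2 : n₀ / 2 = k₀ := by simp [n₀, hk₀def]
    rw [hn₀2]
    rcases lt_or_gt_of_ne hkne with h | h
    · -- k < k₀ : product up to k₀ has extra factors > 1
      have hsplit : (∏ j ∈ Finset.Ioc 0 k, a j) * ∏ j ∈ Finset.Ioc k k₀, a j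
          = ∏ j ∈ Finset.Ioc 0 k₀, a j :=
        Finset.prod_Ioc_consecutive _ (Nat.zero_le k) (le_of_lt h)
      rw [← hsplit]
      have hpos := hprodpos k (by omega)
      have hgt : 1 < ∏ j ∈ Finset.Ioc k k₀, a j := by
        have h1 : ∏ j ∈ Finset.Ioc k k₀, (1:ℝ) < ∏ j ∈ Finset.Ioc k k₀, a j := by
          apply Finset.prod_lt_prod_of_nonempty
          · intro j hj; norm_num
          · intro j hj
            simp only [Finset.mem_Ioc] at hj
            exact aux_gt m j hm (by omega) (by omega)
          · exact ⟨k₀, by simp [Finset.mem_Ioc]; omega⟩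
        simpa using h1
      nlinarith
    · -- k₀ < k : extra factors < 1
      have hsplit : (∏ j ∈ Finset.Ioc 0 k₀, a j) * ∏ j ∈ Finset.Ioc k₀ k, a j
          = ∏ j ∈ Finset.Ioc 0 k, a j :=
        Finset.prod_Ioc_consecutive _ (Nat.zero_le k₀) (le_of_lt h)
      rw [← hsplit]
      have hpos := hprodpos k₀ h2k₀
      have hlt : ∏ j ∈ Finset.Ioc k₀ k, a j < 1 := by
        calc ∏ j ∈ Finset.Ioc k₀ k, a j < ∏ j ∈ Finset.Ioc k₀ k, (1:ℝ) := by
              apply Finset.prod_lt_prod_of_nonempty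
              · intro j hj
                simp only [Finset.mem_Ioc] at hj
                have := aux_pos m j hm (by omega) (by omega)
                positivity
              · intro j hj
                simp only [Finset.mem_Ioc] at hj
                exact aux_lt m j hm (by omega) (by omega)
              · exact ⟨k, by simp [Finset.mem_Ioc]; omega⟩
          _ = 1 := by simp
      nlinarith
  refine ⟨⟨(m+1)/3, by simp [n₀]; ring⟩, by simp only [n₀]; omega, ?_, key⟩
  intro n hn hnm
  by_cases hne : n = n₀
  · rw [hne]
  · exact le_of_lt (key n hn hnm hne)
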